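/- Let Φ(ξ₁,ξ₂,ξ₃) = (ξ₁², 2ξ₁ξ₂, 2ξ₁ξ₃) and let m_i(p) = (∇Φ_i(p), −e_i) ∈ ℝ⁶ be the corresponding normal vectors. Then for any p₁ = (ξ₁,ξ₂,ξ₃) and p₂ = (η₁,η₂,η₃) in ℝ³, the transversality determinant satisfies |det(m₁(p₁), m₂(p₁), m₃(p₁), m₁(p₂), m₂(p₂), m₃(p₂))| = 8|ξ₁ − η₁|³. -/

import Mathlib

set_option maxRecDepth 40000
set_option maxHeartbeats 1000000

/-- For `Φ(ξ) = (ξ₁², 2ξ₁ξ₂, 2ξ₁ξ₃)`, the transversality determinant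
`|det(m₁(p₁), m₂(p₁), m₃(p₁), m₁(p₂), m₂(p₂), m₃(p₂))|` (the `mᵢ(p) = (∇Φᵢ(p), −eᵢ)` being
the columns of the matrix, i.e. the rows of its transpose) equals `8|ξ₁ − η₁|³`. -/
theorem stmt9 (ξ₁ ξ₂ ξ₃ η₁ η₂ η₃ : ℝ) :
    |(Matrix.transpose
      !![2*ξ₁, 0,    0,    -1, 0,  0;
         2*ξ₂, 2*ξ₁, 0,    0,  -1, 0;
         2*ξ₃, 0,    2*ξ₁, 0,  0,  -1;
         2*η₁, 0,    0,    -1, 0,  0;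
         2*η₂, 2*η₁, 0,    0,  -1, 0;
         2*η₃, 0,    2*η₁, 0,  0,  -1]).det| = 8 * |ξ₁ - η₁| ^ 3 := by
  have ht : (Matrix.transpose
      !![2*ξ₁, 0,    0,    -1, 0,  0;
         2*ξ₂, 2*ξ₁, 0,    0,  -1, 0;
         2*ξ₃, 0,    2*ξ₁, 0,  0,  -1;
         2*η₁, 0,    0,    -1, 0,  0;
         2*η₂, 2*η₁, 0,    0,  -1, 0;
         2*η₃, 0,    2*η₁, 0,  0,  -1]) =
      !![2*ξ₁, 2*ξ₂, 2*ξ₃, 2*η₁, 2*η₂, 2*η₃;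
         0,    2*ξ₁, 0,    0,    2*η₁, 0;
         0,    0,    2*ξ₁, 0,    0,    2*η₁;
         -1,   0,    0,    -1,   0,    0;
         0,    -1,   0,    0,    -1,   0;
         0,    0,    -1,   0,    0,    -1] := by
    rw [← Matrix.transposeᵣ_eq]
    rfl
  rw [ht]
  have h : (!![2*ξ₁, 2*ξ₂, 2*ξ₃, 2*η₁, 2*η₂, 2*η₃;
         0,    2*ξ₁, 0,    0,    2*η₁, 0;
         0,    0,    2*ξ₁, 0,    0,    2*η₁;
         -1,   0,    0,    -1,   0,    0;
         0,    -1,   0,    0,    -1,   0;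
         0,    0,    -1,   0,    0,    -1] : Matrix (Fin 6) (Fin 6) ℝ).det
      = -(2*(ξ₁-η₁))^3 := by
    simp [Matrix.det_succ_row_zero, Fin.sum_univ_succ]
    norm_num [Fin.succAbove, Fin.lt_def, Fin.castSucc, Fin.castAdd, Fin.castLE,
      Matrix.cons_val_zero, Matrix.cons_val_one, Matrix.cons_val_two, Matrix.vecHead, Matrix.vecTail,
      Matrix.cons_val]
    rw [show (![2 * ξ₁, 0, 0, 2 * η₁] : Fin 4 → ℝ) 3 = 2 * η₁ from rfl,
      show (![2 * ξ₁, 0, 0, 2 * η₁, 0] : Fin 5 → ℝ) 3 = 2 * η₁ from rfl]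
    ring
  rw [h, abs_neg, abs_pow, abs_mul]
  rw [show |(2:ℝ)| = 2 by norm_num]
  ring
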